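/- If C_k(X) satisfies S_1(Γ_0, Γ_0) at the zero function, then X satisfies S_1(Γ_k^{sh}, Γ_k): for every sequence of γ_k-shrinkable cozero γ_k-covers of X one can select one member from each so that the selected family is a γ_k-cover of X. -/

import Mathlib

open Filter Topology ContinuousMap

def IsCozero {X : Type*} [TopologicalSpace X] (u : Set X) : Prop :=
  ∃ f : C(X, ℝ), u = {x | f x ≠ 0}

def IsZeroSet {X : Type*} [TopologicalSpace X] (s : Set X) : Prop :=
  ∃ f : C(X, ℝ), s = {x | f x = 0}

def IsShrinkableGammaKCover {X : Type*} [TopologicalSpace X] (𝒰 : Set (Set X)) : Prop :=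
  𝒰.Infinite ∧ Set.univ ∉ 𝒰 ∧ (∀ u ∈ 𝒰, IsCozero u) ∧
    (∀ K : Set X, IsCompact K → {u ∈ 𝒰 | ¬ K ⊆ u}.Finite) ∧
    ∃ F : Set X → Set X, (∀ u ∈ 𝒰, IsZeroSet (F u) ∧ F u ⊆ u) ∧
      ∀ K : Set X, IsCompact K → {u ∈ 𝒰 | ¬ K ⊆ F u}.Finite

/-- A continuous function vanishing on a zero set and equal to `1` off a cozero set
containing it. -/
lemma exists_sep {X : Type*} [TopologicalSpace X] {u s : Set X}
    (hu : IsCozero u) (hs : IsZeroSet s) (hsu : s ⊆ u) :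
    ∃ f : C(X, ℝ), (∀ x ∈ s, f x = 0) ∧ (∀ x ∉ u, f x = 1) := by
  obtain ⟨ψ, rfl⟩ := hu
  obtain ⟨φ, rfl⟩ := hs
  have hden : ∀ x : X, |φ x| + |ψ x| ≠ 0 := by
    intro x hx
    have h1 : |φ x| = 0 ∧ |ψ x| = 0 := by
      constructor <;> nlinarith [abs_nonneg (φ x), abs_nonneg (ψ x)]
    have hφ : φ x = 0 := abs_eq_zero.mp h1.1
    have hψ : ψ x = 0 := abs_eq_zero.mp h1.2
    exact (hsu hφ) hψ
  refine ⟨⟨fun x => |φ x| / (|φ x| + |ψ x|), ?_⟩, ?_, ?_⟩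
  · exact (φ.continuous.abs).div ((φ.continuous.abs).add (ψ.continuous.abs)) hden
  · intro x hx
    simp only [ContinuousMap.coe_mk]
    rw [show φ x = 0 from hx]
    simp
  · intro x hx
    have hψ : ψ x = 0 := by simpa using hx
    have hφ : φ x ≠ 0 := fun h => (hsu h) hψ
    simp only [ContinuousMap.coe_mk, hψ, abs_zero, add_zero]
    exact div_self (abs_ne_zero.mpr hφ)

/-- If `C_k(X)` satisfies `S_1(Γ_0, Γ_0)` at the zero function, then `X` satisfies
`S_1(Γ_k^{sh}, Γ_k)`: from every sequence of γ_k-shrinkable cozero γ_k-covers one may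
select one member from each so that each compact set is contained in all but
finitely many of the selected sets. -/
theorem stmt14 {X : Type*} [TopologicalSpace X] [T35Space X]
    (hC : ∀ g : ℕ → ℕ → C(X, ℝ), (∀ i, Tendsto (g i) atTop (𝓝 0)) →
      ∃ m : ℕ → ℕ, Tendsto (fun i => g i (m i)) atTop (𝓝 (0 : C(X, ℝ)))) :
    ∀ 𝒰 : ℕ → Set (Set X), (∀ i, IsShrinkableGammaKCover (𝒰 i)) →
      ∃ u : ℕ → Set X, (∀ i, u i ∈ 𝒰 i) ∧
        ∀ K : Set X, IsCompact K → {i : ℕ | ¬ K ⊆ u i}.Finite := by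
  intro 𝒰 h𝒰
  -- enumerate each cover injectively
  have henum : ∀ i, ∃ e : ℕ → Set X, Function.Injective e ∧ ∀ n, e n ∈ 𝒰 i := by
    intro i
    obtain ⟨ef, einj⟩ := (h𝒰 i).1.natEmbedding
    exact ⟨fun n => (ef n : Set X), fun a b hab => einj (Subtype.ext hab),
      fun n => (ef n).2⟩
  choose e he_inj he_mem using henum
  -- shrinkings
  have hF : ∀ i, ∃ F : Set X → Set X, (∀ u ∈ 𝒰 i, IsZeroSet (F u) ∧ F u ⊆ u) ∧
      ∀ K : Set X, IsCompact K → {u ∈ 𝒰 i | ¬ K ⊆ F u}.Finite := (fun i => (h𝒰 i).2.2.2.2)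
  choose F hF1 hF2 using hF
  -- separating functions
  have hsep : ∀ i n, ∃ f : C(X, ℝ),
      (∀ x ∈ F i (e i n), f x = 0) ∧ (∀ x ∉ e i n, f x = 1) := by
    intro i n
    have hmem := he_mem i n
    exact exists_sep ((h𝒰 i).2.2.1 _ hmem) ((hF1 i _ hmem).1) ((hF1 i _ hmem).2)
  choose g hg0 hg1 using hsep
  -- eventually K ⊆ F i (e i n)
  have hev : ∀ i (K : Set X), IsCompact K → ∀ᶠ n in atTop, K ⊆ F i (e i n) := by
    intro i K hK
    have hfin : {n : ℕ | ¬ K ⊆ F i (e i n)}.Finite := by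
      have : {n : ℕ | ¬ K ⊆ F i (e i n)} ⊆ (e i) ⁻¹' {u ∈ 𝒰 i | ¬ K ⊆ F i u} := by
        intro n hn
        exact ⟨he_mem i n, hn⟩
      exact ((hF2 i K hK).preimage (Set.injOn_of_injective (he_inj i))).subset this
    have := Set.Finite.eventually_cofinite_notMem hfin
    rw [Nat.cofinite_eq_atTop] at this
    filter_upwards [this] with n hn
    exact not_not.mp hn
  -- each g i tends to 0
  have htend : ∀ i, Tendsto (g i) atTop (𝓝 (0 : C(X, ℝ))) := by
    intro i
    rw [ContinuousMap.tendsto_iff_forall_isCompact_tendstoUniformlyOn]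
    intro K hK
    rw [Metric.tendstoUniformlyOn_iff]
    intro ε hε
    filter_upwards [hev i K hK] with n hn x hx
    rw [hg0 i n x (hn hx)]
    simpa using hε
  obtain ⟨m, hm⟩ := hC g htend
  refine ⟨fun i => e i (m i), fun i => he_mem i (m i), ?_⟩
  intro K hK
  rw [ContinuousMap.tendsto_iff_forall_isCompact_tendstoUniformlyOn] at hm
  have := hm K hK
  rw [Metric.tendstoUniformlyOn_iff] at this
  have h12 := this (1/2) (by norm_num)
  rw [← Nat.cofinite_eq_atTop, eventually_cofinite] at h12
  refine h12.subset ?_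
  intro i hi
  obtain ⟨x, hxK, hxu⟩ := Set.not_subset.mp hi
  intro hcon
  have := hcon x hxK
  rw [hg1 i (m i) x hxu] at this
  simp at this
  norm_num at this
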